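/- Let Y be a finite set and let F : Y × ℝ≥0 → Y be a (single-valued) map satisfying the semigroup property F(y, t+s) = F(F(y,t), s) for all y ∈ Y and all t, s ≥ 0. Then for every y ∈ Y the map t ↦ F(y,t) is constant on the positive reals, i.e., F(y,t) = F(y,s) for all t, s > 0. -/

import Mathlib

/-- **Triviality of continuous-time single-valued dynamics on a finite set.**
If `Y` is finite and `F : Y × ℝ≥0 → Y` satisfies the semigroup property
`F(y, t+s) = F(F(y,t), s)`, then `t ↦ F(y,t)` is constant on the positive reals. -/
theorem singlevalued_semigroup_constant_on_pos {Y : Type*} [Finite Y]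
    (F : Y → NNReal → Y)
    (hsg : ∀ (y : Y) (t s : NNReal), F y (t + s) = F (F y t) s)
    (y : Y) (t s : NNReal) (ht : 0 < t) (hs : 0 < s) :
    F y t = F y s := by
  classical
  set G : NNReal → Y → Y := fun u z => F z u with hGdef
  have hco : ∀ a b : NNReal, G (a + b) = G b ∘ G a := by
    intro a b; funext z; exact hsg z a b
  letI : Fintype (Y → Y) := Fintype.ofFinite _
  -- Step A: idempotency of every G u
  have idem : ∀ u : NNReal, G (u + u) = G u := by
    intro u₀
    set B : ℕ := Fintype.card (Y → Y) with hB
    set N : ℕ := Nat.factorial (B + 1) with hN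
    have hNpos : 0 < N := Nat.factorial_pos _
    set u : NNReal := u₀ / N with hu
    obtain ⟨a, b, hab, heq⟩ :=
      Fintype.exists_ne_map_eq_of_card_lt
        (fun k : Fin (B + 1) => G ((((k : ℕ) : NNReal) + 1) * u))
        (by simp [hB])
    -- WLOG a < b
    have hmain : ∃ i j : ℕ, i < j ∧ j ≤ B ∧
        G (((i : NNReal) + 1) * u) = G (((j : NNReal) + 1) * u) := by
      rcases lt_or_gt_of_ne hab with h | h
      · exact ⟨a, b, h, Nat.lt_succ_iff.mp b.isLt, by exact_mod_cast heq⟩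
      · exact ⟨b, a, h, Nat.lt_succ_iff.mp a.isLt, by exact_mod_cast heq.symm⟩
    obtain ⟨i, j, hij, hjB, hGij⟩ := hmain
    set p : ℕ := j - i with hp
    have hppos : 0 < p := Nat.sub_pos_of_lt hij
    -- shift lemma
    have hshift : ∀ m n r : ℕ,
        G ((m : NNReal) * u) = G ((n : NNReal) * u) →
        G (((m + r : ℕ) : NNReal) * u) = G (((n + r : ℕ) : NNReal) * u) := by
      intro m n r h
      have e1 : ((m + r : ℕ) : NNReal) * u = (m : NNReal) * u + (r : NNReal) * u := by
        push_cast; ring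
      have e2 : ((n + r : ℕ) : NNReal) * u = (n : NNReal) * u + (r : NNReal) * u := by
        push_cast; ring
      rw [e1, e2, hco, hco, h]
    have hbase : G (((i + 1 : ℕ) : NNReal) * u) = G (((j + 1 : ℕ) : NNReal) * u) := by
      push_cast; exact hGij
    -- periodicity
    have hper : ∀ k : ℕ,
        G (((i + 1 : ℕ) : NNReal) * u) = G (((i + 1 + k * p : ℕ) : NNReal) * u) := by
      intro k
      induction k with
      | zero => simp
      | succ k ih =>
        have := hshift (i + 1) (j + 1) (k * p) hbase
        have hj : j + 1 + k * p = i + 1 + (k + 1) * p := by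
          have : j = i + p := by omega
          rw [this]; ring
        rw [hj] at this
        exact ih.trans this
    have hiN : i + 1 ≤ N := le_trans (by omega) (Nat.self_le_factorial (B + 1))
    have hpN : p ∣ N := Nat.dvd_factorial hppos (by omega)
    have key : G ((N : NNReal) * u) = G (((N + N : ℕ) : NNReal) * u) := by
      have h1 := hshift (i + 1) (i + 1 + (N / p) * p) (N - (i + 1)) (hper (N / p))
      have hdiv : N / p * p = N := Nat.div_mul_cancel hpN
      have e1 : i + 1 + (N - (i + 1)) = N := by omega
      have e2 : i + 1 + N / p * p + (N - (i + 1)) = N + N := by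
        rw [hdiv]; omega
      rw [e1, e2] at h1
      exact h1
    have hNu : (N : NNReal) * u = u₀ := by
      rw [hu, mul_div_cancel₀]
      exact Nat.cast_ne_zero.mpr hNpos.ne'
    have hNNu : ((N + N : ℕ) : NNReal) * u = u₀ + u₀ := by
      push_cast; rw [add_mul, hNu]
    rw [hNu, hNNu] at key
    exact key.symm
  -- Step A': halving
  have halfpow : ∀ (k : ℕ) (v : NNReal), G (v / 2 ^ k) = G v := by
    intro k
    induction k with
    | zero => intro v; norm_num
    | succ k ih =>
      intro v
      have h2 : v / 2 ^ (k + 1) = v / 2 ^ k / 2 := by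
        rw [div_div, pow_succ]
      have hhalf : G (v / 2 ^ k / 2) = G (v / 2 ^ k) := by
        have h := idem (v / 2 ^ k / 2)
        rw [add_halves] at h
        exact h.symm
      rw [h2, hhalf, ih]
  -- Step B: absorption
  have absorb : ∀ a b : NNReal, 0 < a → 0 < b → G (b + a) = G b := by
    intro a b ha hb
    obtain ⟨n, hn⟩ := Archimedean.arch a hb
    have hlt : a / 2 ^ n < b := by
      rw [div_lt_iff₀ (pow_pos two_pos n)]
      calc a ≤ n • b := hn
        _ = (n : NNReal) * b := by rw [nsmul_eq_mul]
        _ < (2 : NNReal) ^ n * b := by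
            apply mul_lt_mul_of_pos_right _ hb
            exact_mod_cast n.lt_two_pow_self
        _ = b * 2 ^ n := mul_comm _ _
    set ε : NNReal := a / 2 ^ n with hε
    have hεa : G ε = G a := halfpow n a
    have hsplit : (b - ε) + ε = b := tsub_add_cancel_of_le hlt.le
    have hbG : G b = G ε ∘ G (b - ε) := by
      have h := hco (b - ε) ε
      rwa [hsplit] at h
    calc G (b + a) = G a ∘ G b := hco b a
      _ = G a ∘ (G ε ∘ G (b - ε)) := by rw [hbG]
      _ = (G a ∘ G ε) ∘ G (b - ε) := rfl
      _ = (G ε ∘ G ε) ∘ G (b - ε) := by rw [hεa]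
      _ = G (ε + ε) ∘ G (b - ε) := by rw [hco]
      _ = G ε ∘ G (b - ε) := by rw [idem]
      _ = G ((b - ε) + ε) := (hco _ _).symm
      _ = G b := by rw [hsplit]
  have h1 : G (t + s) = G t := absorb s t hs ht
  have h2 : G (s + t) = G s := absorb t s ht hs
  have : G t = G s := by rw [← h1, add_comm, h2]
  exact congrFun this y
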